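/- Let A and A' be real n×n matrices for which there exist constants C ≥ 1 and ρ ∈ (0,1) such that ‖A^k‖_F ≤ C ρ^k and ‖(A')^k‖_F ≤ C ρ^k for all k ≥ 0, and let Q be a real n×n matrix. Define Σ := ∑_{k=0}^∞ A^k Q (Aᵀ)^k and Σ' := ∑_{k=0}^∞ (A')^k Q ((A')ᵀ)^k, and set Q̃ := (A'−A) Σ' Aᵀ + A Σ' (A'−A)ᵀ + (A'−A) Σ' (A'−A)ᵀ. Then Σ' − Σ = ∑_{k=0}^∞ A^k Q̃ (Aᵀ)^k; equivalently, Σ' − Σ = A (Σ' − Σ) Aᵀ + Q̃. -/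

import Mathlib

open Matrix MeasureTheory ProbabilityTheory Filter

/-- Frobenius norm of a real matrix. -/
noncomputable def frob {α β : Type*} [Fintype α] [Fintype β] (A : Matrix α β ℝ) : ℝ :=
  Real.sqrt (∑ i, ∑ j, (A i j) ^ 2)

/-- Spectral norm (largest singular value) of a real matrix. -/
noncomputable def spec {α β : Type*} [Fintype α] [Fintype β] [DecidableEq β]
    (A : Matrix α β ℝ) : ℝ :=
  ‖LinearMap.toContinuousLinearMap (Matrix.toEuclideanLin A)‖

/-- The positive semidefinite square root of a positive semidefinite real matrix
(junk value `0` if the matrix is not positive semidefinite). -/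
noncomputable def msqrt {α : Type*} [Fintype α] [DecidableEq α]
    (M : Matrix α α ℝ) : Matrix α α ℝ :=
  open scoped Classical in
  if h : M.PosSemidef then
    (h.1.eigenvectorUnitary : Matrix α α ℝ) *
      diagonal ((RCLike.ofReal : ℝ → ℝ) ∘ Real.sqrt ∘ h.1.eigenvalues) *
      (star h.1.eigenvectorUnitary : Matrix α α ℝ)
  else 0

/-- Euclidean norm of a real vector. -/
noncomputable def vnorm {α : Type*} [Fintype α] (v : α → ℝ) : ℝ :=
  Real.sqrt (∑ i, (v i) ^ 2)

section Aux
attribute [local instance] Matrix.frobeniusNormedAddCommGroup Matrix.frobeniusNormedRing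
  Matrix.frobeniusNormedSpace

variable {n : ℕ}

lemma frob_eq_norm (A : Matrix (Fin n) (Fin n) ℝ) : frob A = ‖A‖ := by
  rw [Matrix.frobenius_norm_def, frob, Real.sqrt_eq_rpow]
  congr 1
  simp [Real.norm_eq_abs, sq_abs]

lemma norm_term_le (M Q : Matrix (Fin n) (Fin n) ℝ) {C ρ : ℝ}
    (hM : ∀ k : ℕ, ‖M ^ k‖ ≤ C * ρ ^ k) (k : ℕ) :
    ‖M ^ k * Q * Mᵀ ^ k‖ ≤ C * C * ‖Q‖ * (ρ ^ 2) ^ k := by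
  have h1 : ‖Mᵀ ^ k‖ = ‖M ^ k‖ := by rw [← Matrix.transpose_pow, Matrix.frobenius_norm_transpose]
  have hC0 : (0:ℝ) ≤ C * ρ ^ k := le_trans (norm_nonneg _) (hM k)
  calc ‖M ^ k * Q * Mᵀ ^ k‖ ≤ ‖M ^ k * Q‖ * ‖Mᵀ ^ k‖ := Matrix.frobenius_norm_mul _ _
    _ ≤ ‖M ^ k‖ * ‖Q‖ * ‖M ^ k‖ := by
        rw [h1]
        exact mul_le_mul_of_nonneg_right (Matrix.frobenius_norm_mul _ _) (norm_nonneg _)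
    _ ≤ (C * ρ ^ k) * ‖Q‖ * (C * ρ ^ k) :=
        mul_le_mul (mul_le_mul_of_nonneg_right (hM k) (norm_nonneg _)) (hM k) (norm_nonneg _)
          (mul_nonneg hC0 (norm_nonneg _))
    _ = C * C * ‖Q‖ * (ρ ^ 2) ^ k := by ring

lemma summable_term (M Q : Matrix (Fin n) (Fin n) ℝ) {C ρ : ℝ} (hρ : 0 < ρ) (hρ1 : ρ < 1)
    (hM : ∀ k : ℕ, ‖M ^ k‖ ≤ C * ρ ^ k) :
    Summable (fun k : ℕ => M ^ k * Q * Mᵀ ^ k) := by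
  apply Summable.of_norm_bounded (g := fun k => C * C * ‖Q‖ * (ρ ^ 2) ^ k)
  · apply Summable.mul_left
    exact summable_geometric_of_lt_one (by positivity) (by nlinarith)
  · exact norm_term_le M Q hM

lemma tsum_fixed_point (M Q : Matrix (Fin n) (Fin n) ℝ) {C ρ : ℝ} (hρ : 0 < ρ) (hρ1 : ρ < 1)
    (hM : ∀ k : ℕ, ‖M ^ k‖ ≤ C * ρ ^ k) :
    (∑' k : ℕ, M ^ k * Q * Mᵀ ^ k) = M * (∑' k : ℕ, M ^ k * Q * Mᵀ ^ k) * Mᵀ + Q := by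
  have hs := summable_term M Q hρ hρ1 hM
  have h1 : M * (∑' k : ℕ, M ^ k * Q * Mᵀ ^ k) * Mᵀ
      = ∑' k : ℕ, M ^ (k+1) * Q * Mᵀ ^ (k+1) := by
    rw [← hs.tsum_mul_left M, ← (hs.mul_left M).tsum_mul_right Mᵀ]
    congr 1; funext k; rw [pow_succ' M, pow_succ Mᵀ]; simp [mul_assoc]
  rw [h1, Summable.tsum_eq_zero_add hs]
  simp [add_comm]

lemma tsum_unique (M Q X : Matrix (Fin n) (Fin n) ℝ) {C ρ : ℝ} (hρ : 0 < ρ) (hρ1 : ρ < 1)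
    (hM : ∀ k : ℕ, ‖M ^ k‖ ≤ C * ρ ^ k)
    (hX : X = M * X * Mᵀ + Q) :
    X = ∑' k : ℕ, M ^ k * Q * Mᵀ ^ k := by
  have hs := summable_term M Q hρ hρ1 hM
  have key : ∀ N : ℕ, X = (∑ k ∈ Finset.range N, M ^ k * Q * Mᵀ ^ k) + M ^ N * X * Mᵀ ^ N := by
    intro N
    induction N with
    | zero => simp
    | succ N ih =>
      rw [Finset.sum_range_succ, pow_succ M, pow_succ' Mᵀ]
      calc X = (∑ k ∈ Finset.range N, M ^ k * Q * Mᵀ ^ k) + M ^ N * X * Mᵀ ^ N := ih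
        _ = (∑ k ∈ Finset.range N, M ^ k * Q * Mᵀ ^ k) + M ^ N * (M * X * Mᵀ + Q) * Mᵀ ^ N := by
            rw [← hX]
        _ = _ := by noncomm_ring
  have h0 : Tendsto (fun N : ℕ => M ^ N * X * Mᵀ ^ N) atTop (nhds 0) := by
    apply squeeze_zero_norm (norm_term_le M X hM)
    rw [show (0:ℝ) = C * C * ‖X‖ * 0 by ring]
    exact (tendsto_pow_atTop_nhds_zero_of_lt_one (by positivity) (by nlinarith)).const_mul _
  have h2 : Tendsto (fun N : ℕ => (∑ k ∈ Finset.range N, M ^ k * Q * Mᵀ ^ k)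
      + M ^ N * X * Mᵀ ^ N) atTop (nhds ((∑' k : ℕ, M ^ k * Q * Mᵀ ^ k) + 0)) :=
    (hs.hasSum.tendsto_sum_nat).add h0
  have h3 : Tendsto (fun _ : ℕ => X) atTop (nhds X) := tendsto_const_nhds
  have := tendsto_nhds_unique (h3.congr fun N => (key N)) h2
  simpa using this

theorem lyapunov_perturbation_identity {n : ℕ} (A A' Q : Matrix (Fin n) (Fin n) ℝ)
    (C ρ : ℝ) (hC : 1 ≤ C) (hρ : ρ ∈ Set.Ioo (0 : ℝ) 1)
    (hA : ∀ k : ℕ, frob (A ^ k) ≤ C * ρ ^ k)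
    (hA' : ∀ k : ℕ, frob (A' ^ k) ≤ C * ρ ^ k) :
    (∑' k : ℕ, A' ^ k * Q * A'ᵀ ^ k) - (∑' k : ℕ, A ^ k * Q * Aᵀ ^ k)
      = ∑' k : ℕ, A ^ k *
          ((A' - A) * (∑' j : ℕ, A' ^ j * Q * A'ᵀ ^ j) * Aᵀ +
            A * (∑' j : ℕ, A' ^ j * Q * A'ᵀ ^ j) * (A' - A)ᵀ +
            (A' - A) * (∑' j : ℕ, A' ^ j * Q * A'ᵀ ^ j) * (A' - A)ᵀ) * Aᵀ ^ k
    ∧ (∑' k : ℕ, A' ^ k * Q * A'ᵀ ^ k) - (∑' k : ℕ, A ^ k * Q * Aᵀ ^ k)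
      = A * ((∑' k : ℕ, A' ^ k * Q * A'ᵀ ^ k) - (∑' k : ℕ, A ^ k * Q * Aᵀ ^ k)) * Aᵀ +
          ((A' - A) * (∑' j : ℕ, A' ^ j * Q * A'ᵀ ^ j) * Aᵀ +
            A * (∑' j : ℕ, A' ^ j * Q * A'ᵀ ^ j) * (A' - A)ᵀ +
            (A' - A) * (∑' j : ℕ, A' ^ j * Q * A'ᵀ ^ j) * (A' - A)ᵀ) := by
  obtain ⟨hρ0, hρ1⟩ := hρ
  have hA2 : ∀ k : ℕ, ‖A ^ k‖ ≤ C * ρ ^ k := fun k => (frob_eq_norm _) ▸ hA k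
  have hA'2 : ∀ k : ℕ, ‖A' ^ k‖ ≤ C * ρ ^ k := fun k => (frob_eq_norm _) ▸ hA' k
  set S' : Matrix (Fin n) (Fin n) ℝ := ∑' k : ℕ, A' ^ k * Q * A'ᵀ ^ k with hS'
  set S : Matrix (Fin n) (Fin n) ℝ := ∑' k : ℕ, A ^ k * Q * Aᵀ ^ k with hS
  set Qt : Matrix (Fin n) (Fin n) ℝ :=
    (A' - A) * S' * Aᵀ + A * S' * (A' - A)ᵀ + (A' - A) * S' * (A' - A)ᵀ with hQt
  have lyapA : S = A * S * Aᵀ + Q := tsum_fixed_point A Q hρ0 hρ1 hA2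
  have lyapA' : S' = A' * S' * A'ᵀ + Q := tsum_fixed_point A' Q hρ0 hρ1 hA'2
  have hQt2 : Qt = A' * S' * A'ᵀ - A * S' * Aᵀ := by
    rw [hQt, Matrix.transpose_sub]
    noncomm_ring
  have second : S' - S = A * (S' - S) * Aᵀ + Qt := by
    rw [hQt2]
    have e1 : A' * S' * A'ᵀ = S' - Q := eq_sub_iff_add_eq.2 lyapA'.symm
    have e2 : A * S * Aᵀ = S - Q := eq_sub_iff_add_eq.2 lyapA.symm
    rw [e1]
    calc S' - S = (A * S' * Aᵀ - (S - Q)) + (S' - Q - A * S' * Aᵀ) := by noncomm_ring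
      _ = _ := by rw [← e2]; noncomm_ring
  exact ⟨tsum_unique A Qt (S' - S) hρ0 hρ1 hA2 second, second⟩

end Aux
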